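/- Let S0 and T0 be closed subspaces of a complex Hilbert space H admitting a common complement. Consider E := {(P, G, K) : P an orthogonal projection on H, G and K invertible operators with G(range P) = range P and K(range P) = range P}, with the topology inherited from B(H)³, and let F := {(P, G, K) ∈ E : G(ker P) = S0 and K(ker P) = T0}. Then: (i) every (P, G, K) ∈ F satisfies range(P) ∔ S0 = H and range(P) ∔ T0 = H (so range(P) is a common complement of S0 and T0); (ii) F is closed in E. -/

import Mathlib

variable (H : Type*) [NormedAddCommGroup H] [InnerProductSpace ℂ H] [CompleteSpace H]

/-- `P` is an orthogonal projection: idempotent and self-adjoint. -/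
def IsOrthProjection (P : H →L[ℂ] H) : Prop :=
  P ∘L P = P ∧ IsSelfAdjoint P

variable {H}

/-- The total space `E = ⋃_Z Gl^Z × Gl^Z`, realized as the set of triples
`(P, G, K)` with `P` an orthogonal projection and `G, K` invertible operators
preserving `range P`, topologized as a subspace of `B(H)³`. -/
abbrev Espace (H : Type*) [NormedAddCommGroup H] [InnerProductSpace ℂ H] [CompleteSpace H] :
    Type _ :=
  {x : (H →L[ℂ] H) × (H →L[ℂ] H) × (H →L[ℂ] H) //
    IsOrthProjection H x.1 ∧ IsUnit x.2.1 ∧ IsUnit x.2.2 ∧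
    Submodule.map (x.2.1 : H →ₗ[ℂ] H) (LinearMap.range (x.1 : H →ₗ[ℂ] H)) = LinearMap.range (x.1 : H →ₗ[ℂ] H) ∧
    Submodule.map (x.2.2 : H →ₗ[ℂ] H) (LinearMap.range (x.1 : H →ₗ[ℂ] H)) = LinearMap.range (x.1 : H →ₗ[ℂ] H)}

/-- The fiber `F_{(S₀,T₀)}` over a pair of subspaces `(S₀, T₀)`. -/
def fiberSet (S₀ T₀ : Submodule ℂ H) : Set (Espace H) :=
  {x : Espace H |
    Submodule.map (x.val.2.1 : H →ₗ[ℂ] H) (LinearMap.ker (x.val.1 : H →ₗ[ℂ] H)) = S₀ ∧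
    Submodule.map (x.val.2.2 : H →ₗ[ℂ] H) (LinearMap.ker (x.val.1 : H →ₗ[ℂ] H)) = T₀}

set_option linter.unusedSectionVars false

section Aux

/-- Idempotent CLM gives complementary range and kernel. -/
lemma isCompl_range_ker_of_idem (P : H →L[ℂ] H) (hP : P ∘L P = P) :
    IsCompl (LinearMap.range (P : H →ₗ[ℂ] H)) (LinearMap.ker (P : H →ₗ[ℂ] H)) := by
  have hproj : LinearMap.IsProj (LinearMap.range (P : H →ₗ[ℂ] H)) (P : H →ₗ[ℂ] H) := by
    constructor
    · intro x; exact ⟨x, rfl⟩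
    · rintro x ⟨y, rfl⟩
      have := congrFun (congrArg DFunLike.coe hP) y
      simpa using this
  simpa using hproj.isCompl

/-- An invertible operator maps a complementary pair to a complementary pair. -/
lemma isCompl_map_of_isUnit {G : H →L[ℂ] H} (hG : IsUnit G) {p q : Submodule ℂ H}
    (h : IsCompl p q) : IsCompl (Submodule.map (G : H →ₗ[ℂ] H) p) (Submodule.map (G : H →ₗ[ℂ] H) q) := by
  have hinj : Function.Injective G := by
    intro a b hab
    have h1 := ContinuousLinearMap.ext_iff.1 (Ring.inverse_mul_cancel G hG) a
    have h2 := ContinuousLinearMap.ext_iff.1 (Ring.inverse_mul_cancel G hG) b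
    simp only [ContinuousLinearMap.mul_apply, ContinuousLinearMap.one_apply] at h1 h2
    rw [← h1, ← h2, hab]
  have hsurj : Function.Surjective G := by
    intro b
    refine ⟨Ring.inverse G b, ?_⟩
    have h1 := ContinuousLinearMap.ext_iff.1 (Ring.mul_inverse_cancel G hG) b
    simpa only [ContinuousLinearMap.mul_apply, ContinuousLinearMap.one_apply] using h1
  constructor
  · rw [Submodule.disjoint_def]
    rintro z ⟨a, ha, rfl⟩ hz
    obtain ⟨b, hb, hab⟩ : _ := hz
    have : (b : H) = a := hinj hab
    subst this
    have : (b : H) ∈ p ⊓ q := ⟨ha, hb⟩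
    rw [h.inf_eq_bot] at this
    have hb0 : (b : H) = 0 := by simpa using this
    simp [hb0]
  · rw [codisjoint_iff, ← Submodule.map_sup, h.sup_eq_top, Submodule.map_top]
    exact LinearMap.range_eq_top.2 hsurj

/-- Characterization of `map G (ker P) = S₀` by two operator equations. -/
lemma map_ker_eq_iff (S₀ : Submodule ℂ H) [CompleteSpace S₀]
    (P G : H →L[ℂ] H) (hP : P ∘L P = P) (hG : IsUnit G) :
    Submodule.map (G : H →ₗ[ℂ] H) (LinearMap.ker (P : H →ₗ[ℂ] H)) = S₀ ↔
      ((1 - S₀.subtypeL ∘L S₀.orthogonalProjectionOnto) ∘L G ∘L (1 - P) = 0 ∧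
       P ∘L Ring.inverse G ∘L (S₀.subtypeL ∘L S₀.orthogonalProjectionOnto) = 0) := by
  set Q : H →L[ℂ] H := S₀.subtypeL ∘L S₀.orthogonalProjectionOnto with hQ
  have hQmem : ∀ v : H, Q v ∈ S₀ := fun v => (S₀.orthogonalProjectionOnto v).2
  have hQid : ∀ v ∈ S₀, Q v = v := by
    intro v hv
    simpa [hQ] using Submodule.starProjection_eq_self_iff.2 hv
  have hinv : ∀ v : H, Ring.inverse G (G v) = v := by
    intro v
    have h1 := ContinuousLinearMap.ext_iff.1 (Ring.inverse_mul_cancel G hG) v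
    simpa only [ContinuousLinearMap.mul_apply, ContinuousLinearMap.one_apply] using h1
  have hinv' : ∀ v : H, G (Ring.inverse G v) = v := by
    intro v
    have h1 := ContinuousLinearMap.ext_iff.1 (Ring.mul_inverse_cancel G hG) v
    simpa only [ContinuousLinearMap.mul_apply, ContinuousLinearMap.one_apply] using h1
  constructor
  · intro h
    constructor
    · ext v
      have hker : (1 - P) v ∈ LinearMap.ker (P : H →ₗ[ℂ] H) := by
        have := congrFun (congrArg DFunLike.coe hP) v
        simp only [ContinuousLinearMap.comp_apply] at this
        simp [LinearMap.mem_ker, map_sub, this]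
      have hmem : G ((1 - P) v) ∈ S₀ := h ▸ Submodule.mem_map_of_mem hker
      simp only [ContinuousLinearMap.comp_apply, ContinuousLinearMap.sub_apply,
        ContinuousLinearMap.one_apply, ContinuousLinearMap.zero_apply]
      rw [sub_eq_zero]
      exact (hQid _ hmem).symm
    · ext v
      have hmem : Q v ∈ Submodule.map (G : H →ₗ[ℂ] H) (LinearMap.ker (P : H →ₗ[ℂ] H)) := h.symm ▸ hQmem v
      obtain ⟨k, hk, hkv⟩ := hmem
      simp only [ContinuousLinearMap.comp_apply, ContinuousLinearMap.zero_apply]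
      rw [← hkv, ContinuousLinearMap.coe_coe, hinv]
      exact hk
  · rintro ⟨h1, h2⟩
    apply le_antisymm
    · rintro _ ⟨v, hv, rfl⟩
      have hfix : (1 - P) v = v := by
        have hv0 : P v = 0 := hv
        simp [ContinuousLinearMap.sub_apply, hv0]
      have := ContinuousLinearMap.ext_iff.1 h1 v
      simp only [ContinuousLinearMap.comp_apply, hfix, ContinuousLinearMap.sub_apply,
        ContinuousLinearMap.one_apply, ContinuousLinearMap.zero_apply, sub_eq_zero] at this
      rw [ContinuousLinearMap.coe_coe, this]
      exact hQmem (G v)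
    · intro s hs
      have := ContinuousLinearMap.ext_iff.1 h2 s
      simp only [ContinuousLinearMap.comp_apply, ContinuousLinearMap.zero_apply] at this
      rw [hQ] at this
      rw [show (S₀.subtypeL ∘L S₀.orthogonalProjectionOnto) s = Q s from rfl, hQid s hs] at this
      exact ⟨Ring.inverse G s, this, hinv' s⟩

end Aux

/-- If `S₀`, `T₀` admit a common complement, then (i) each `(P, G, K)` in the
fiber `F_{(S₀,T₀)}` satisfies `range P ∔ S₀ = H` and `range P ∔ T₀ = H`, and
(ii) the fiber is closed in `E`. -/
theorem fiber_complement_and_closed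
    (S₀ T₀ : Submodule ℂ H) (hS₀ : IsClosed (S₀ : Set H)) (hT₀ : IsClosed (T₀ : Set H))
    (hcc : ∃ Z : Submodule ℂ H, IsClosed (Z : Set H) ∧ IsCompl Z S₀ ∧ IsCompl Z T₀) :
    (∀ x ∈ fiberSet S₀ T₀,
      IsCompl (LinearMap.range (x.val.1 : H →ₗ[ℂ] H)) S₀ ∧ IsCompl (LinearMap.range (x.val.1 : H →ₗ[ℂ] H)) T₀) ∧
    IsClosed (fiberSet S₀ T₀) := by
  haveI : CompleteSpace S₀ := hS₀.completeSpace_coe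
  haveI : CompleteSpace T₀ := hT₀.completeSpace_coe
  constructor
  · rintro ⟨⟨P, G, K⟩, ⟨hP, hSA⟩, hG, hK, hGr, hKr⟩ ⟨hGk, hKk⟩
    have hcompl := isCompl_range_ker_of_idem P hP
    constructor
    · have := isCompl_map_of_isUnit hG hcompl
      rwa [hGr, hGk] at this
    · have := isCompl_map_of_isUnit hK hcompl
      rwa [hKr, hKk] at this
  · -- closedness
    set QS : H →L[ℂ] H := S₀.subtypeL ∘L S₀.orthogonalProjectionOnto with hQS
    set QT : H →L[ℂ] H := T₀.subtypeL ∘L T₀.orthogonalProjectionOnto with hQT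
    have hinvcont : Continuous fun x : Espace H => Ring.inverse (x.val.2.1) := by
      rw [continuous_iff_continuousAt]
      intro x
      have hx : (x.2.2.1.unit : H →L[ℂ] H) = x.val.2.1 := x.2.2.1.unit_spec
      have h1 : ContinuousAt Ring.inverse (x.val.2.1) := by
        rw [← hx]; exact NormedRing.inverse_continuousAt x.2.2.1.unit
      have hcv : Continuous fun x : Espace H => x.val.2.1 := by fun_prop
      show ContinuousAt (Ring.inverse ∘ fun x : Espace H => x.val.2.1) x
      exact Filter.Tendsto.comp h1 hcv.continuousAt
    have hinvcont' : Continuous fun x : Espace H => Ring.inverse (x.val.2.2) := by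
      rw [continuous_iff_continuousAt]
      intro x
      have hx : (x.2.2.2.1.unit : H →L[ℂ] H) = x.val.2.2 := x.2.2.2.1.unit_spec
      have h1 : ContinuousAt Ring.inverse (x.val.2.2) := by
        rw [← hx]; exact NormedRing.inverse_continuousAt x.2.2.2.1.unit
      have hcv : Continuous fun x : Espace H => x.val.2.2 := by fun_prop
      show ContinuousAt (Ring.inverse ∘ fun x : Espace H => x.val.2.2) x
      exact Filter.Tendsto.comp h1 hcv.continuousAt
    have hc1 : Continuous fun x : Espace H =>
        (1 - QS) ∘L x.val.2.1 ∘L (1 - x.val.1) := by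
      apply Continuous.clm_comp continuous_const
      apply Continuous.clm_comp (by fun_prop)
      exact continuous_const.sub (by fun_prop)
    have hc2 : Continuous fun x : Espace H =>
        x.val.1 ∘L Ring.inverse (x.val.2.1) ∘L QS := by
      apply Continuous.clm_comp (by fun_prop)
      exact Continuous.clm_comp hinvcont continuous_const
    have hc3 : Continuous fun x : Espace H =>
        (1 - QT) ∘L x.val.2.2 ∘L (1 - x.val.1) := by
      apply Continuous.clm_comp continuous_const
      apply Continuous.clm_comp (by fun_prop)
      exact continuous_const.sub (by fun_prop)
    have hc4 : Continuous fun x : Espace H =>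
        x.val.1 ∘L Ring.inverse (x.val.2.2) ∘L QT := by
      apply Continuous.clm_comp (by fun_prop)
      exact Continuous.clm_comp hinvcont' continuous_const
    have : fiberSet S₀ T₀ =
        ((fun x : Espace H => (1 - QS) ∘L x.val.2.1 ∘L (1 - x.val.1)) ⁻¹' {0} ∩
         (fun x : Espace H => x.val.1 ∘L Ring.inverse (x.val.2.1) ∘L QS) ⁻¹' {0}) ∩
        ((fun x : Espace H => (1 - QT) ∘L x.val.2.2 ∘L (1 - x.val.1)) ⁻¹' {0} ∩
         (fun x : Espace H => x.val.1 ∘L Ring.inverse (x.val.2.2) ∘L QT) ⁻¹' {0}) := by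
      ext x
      obtain ⟨⟨P, G, K⟩, ⟨hP, hSA⟩, hG, hK, hGr, hKr⟩ := x
      simp only [fiberSet, Set.mem_setOf_eq, Set.mem_inter_iff, Set.mem_preimage,
        Set.mem_singleton_iff]
      rw [map_ker_eq_iff S₀ P G hP hG, map_ker_eq_iff T₀ P K hP hK]
    rw [this]
    exact ((isClosed_singleton.preimage hc1).inter (isClosed_singleton.preimage hc2)).inter
      ((isClosed_singleton.preimage hc3).inter (isClosed_singleton.preimage hc4))
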